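/- Let P be the probability measure with density 3/2 on [0, 1/3] and 9/4 on [2/3, 7/9] ∪ [8/9, 1]. Then ∫ min((x - 1/6)², (x - 13/18)², (x - 17/18)²) dP = 5/972, and for every three-point set α ⊂ ℝ, ∫ min_{a ∈ α}(x-a)² dP ≥ 5/972; thus {1/6, 13/18, 17/18} is an optimal set of three-means with V₃ = 5/972. -/

import Mathlib

open MeasureTheory Set

/-- The density: `3/2` on `[0,1/3]`, `9/4` on `[2/3,7/9] ∪ [8/9,1]`, `0` elsewhere. -/
noncomputable def g (x : ℝ) : ℝ :=
  Set.indicator (Set.Icc (0 : ℝ) (1 / 3)) (fun _ => (3 : ℝ) / 2) x +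
    Set.indicator (Set.Icc ((2 : ℝ) / 3) (7 / 9) ∪ Set.Icc ((8 : ℝ) / 9) 1)
      (fun _ => (9 : ℝ) / 4) x

/-- The piecewise uniform probability measure with finitely many pieces. -/
noncomputable def Q : Measure ℝ :=
  MeasureTheory.volume.withDensity (fun x => ENNReal.ofReal (g x))

lemma g_meas : Measurable g := by
  unfold g
  exact ((measurable_const.indicator measurableSet_Icc)).add
    ((measurable_const.indicator ((measurableSet_Icc).union measurableSet_Icc)))

lemma g_nonneg (x : ℝ) : 0 ≤ g x := by
  unfold g
  have h1 : (0:ℝ) ≤ Set.indicator (Set.Icc (0 : ℝ) (1 / 3)) (fun _ => (3 : ℝ) / 2) x :=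
    Set.indicator_nonneg (fun _ _ => by norm_num) x
  have h2 : (0:ℝ) ≤ Set.indicator (Set.Icc ((2 : ℝ) / 3) (7 / 9) ∪ Set.Icc ((8 : ℝ) / 9) 1)
      (fun _ => (9 : ℝ) / 4) x := Set.indicator_nonneg (fun _ _ => by norm_num) x
  linarith

lemma Q_integral (F : ℝ → ℝ) (hF : Continuous F) :
    ∫ x, F x ∂Q = (3/2) * (∫ x in (0:ℝ)..(1/3), F x) +
      (9/4) * (∫ x in (2/3:ℝ)..(7/9), F x) + (9/4) * (∫ x in (8/9:ℝ)..1, F x) := by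
  have h0 : Q = MeasureTheory.volume.withDensity (fun x => ((g x).toNNReal : ENNReal)) := rfl
  rw [h0, integral_withDensity_eq_integral_smul (g_meas.real_toNNReal) F]
  have h1 : ∀ x, (g x).toNNReal • F x = g x * F x := by
    intro x
    rw [NNReal.smul_def, Real.coe_toNNReal _ (g_nonneg x), smul_eq_mul]
  simp only [h1]
  have h2 : ∀ x, g x * F x =
      Set.indicator (Set.Icc (0 : ℝ) (1 / 3)) (fun y => (3:ℝ)/2 * F y) x +
      Set.indicator (Set.Icc ((2 : ℝ) / 3) (7 / 9) ∪ Set.Icc ((8 : ℝ) / 9) 1)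
        (fun y => (9:ℝ)/4 * F y) x := by
    intro x
    unfold g
    rw [add_mul, Set.indicator_mul_left, Set.indicator_mul_left]
  simp only [h2]
  have hi1 : Integrable (Set.indicator (Set.Icc (0 : ℝ) (1 / 3)) (fun y => (3:ℝ)/2 * F y)) := by
    rw [integrable_indicator_iff measurableSet_Icc]
    exact ((continuous_const.mul hF).integrableOn_Icc)
  have hi2 : Integrable (Set.indicator (Set.Icc ((2 : ℝ) / 3) (7 / 9) ∪ Set.Icc ((8 : ℝ) / 9) 1)
      (fun y => (9:ℝ)/4 * F y)) := by
    rw [integrable_indicator_iff ((measurableSet_Icc).union measurableSet_Icc)]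
    exact ((continuous_const.mul hF).integrableOn_Icc).union
      ((continuous_const.mul hF).integrableOn_Icc)
  rw [integral_add hi1 hi2, integral_indicator measurableSet_Icc,
    integral_indicator ((measurableSet_Icc).union measurableSet_Icc)]
  have hdisj : Disjoint (Set.Icc ((2:ℝ) / 3) (7 / 9)) (Set.Icc ((8:ℝ) / 9) 1) := by
    refine Set.disjoint_left.2 ?_
    rintro x ⟨hx1, hx2⟩ ⟨hx3, hx4⟩
    linarith
  rw [setIntegral_union (f := fun x => (9:ℝ)/4 * F x) hdisj measurableSet_Icc ((continuous_const.mul hF).integrableOn_Icc)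
    ((continuous_const.mul hF).integrableOn_Icc)]
  have e1 : ∫ x in Set.Icc (0:ℝ) (1/3), (3:ℝ)/2 * F x = (3/2) * ∫ x in (0:ℝ)..(1/3), F x := by
    rw [integral_Icc_eq_integral_Ioc, ← intervalIntegral.integral_of_le (by norm_num : (0:ℝ) ≤ 1/3),
      intervalIntegral.integral_const_mul]
  have e2 : ∫ x in Set.Icc ((2:ℝ)/3) (7/9), (9:ℝ)/4 * F x = (9/4) * ∫ x in ((2:ℝ)/3)..(7/9), F x := by
    rw [integral_Icc_eq_integral_Ioc, ← intervalIntegral.integral_of_le (by norm_num : (2/3:ℝ) ≤ 7/9),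
      intervalIntegral.integral_const_mul]
  have e3 : ∫ x in Set.Icc ((8:ℝ)/9) 1, (9:ℝ)/4 * F x = (9/4) * ∫ x in ((8:ℝ)/9)..1, F x := by
    rw [integral_Icc_eq_integral_Ioc, ← intervalIntegral.integral_of_le (by norm_num : (8/9:ℝ) ≤ 1),
      intervalIntegral.integral_const_mul]
  rw [e1, e2, e3, ← add_assoc]

/-- three-point min integrand -/
noncomputable def m3 (a b c x : ℝ) : ℝ := min (min ((x - a)^2) ((x - b)^2)) ((x - c)^2)

lemma int_sq (c p q : ℝ) : ∫ x in p..q, (x - c)^2 = ((q - c)^3 - (p - c)^3)/3 := by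
  have h := intervalIntegral.integral_comp_sub_right (fun x : ℝ => x ^ 2) c (a := p) (b := q)
  rw [h, integral_pow]
  norm_num

lemma one_point (c p q : ℝ) (h : p ≤ q) : (q - p)^3/12 ≤ ∫ x in p..q, (x - c)^2 := by
  rw [int_sq]
  nlinarith [sq_nonneg (q + p - 2*c), sq_nonneg (q - p)]

lemma cont3 (a b c : ℝ) : Continuous (m3 a b c) := by
  unfold m3; fun_prop

lemma m3_nonneg (a b c x : ℝ) : 0 ≤ m3 a b c x :=
  le_min (le_min (sq_nonneg _) (sq_nonneg _)) (sq_nonneg _)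

lemma nonneg3 (a b c p q : ℝ) (h : p ≤ q) : 0 ≤ ∫ x in p..q, m3 a b c x :=
  intervalIntegral.integral_nonneg h (fun x _ => m3_nonneg a b c x)

lemma sq_le_left (x u v : ℝ) (h1 : u ≤ v) (h2 : 2*x ≤ u + v) : (x-u)^2 ≤ (x-v)^2 := by nlinarith
lemma sq_le_right (x u v : ℝ) (h1 : v ≤ u) (h2 : u + v ≤ 2*x) : (x-u)^2 ≤ (x-v)^2 := by nlinarith

/-- lower bound a piece of the integral of `m3` by a single shifted square -/
lemma piece_lb (a b c d p q : ℝ) (hpq : p ≤ q)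
    (h : ∀ x ∈ Set.Icc p q, (x-d)^2 ≤ m3 a b c x) :
    ((q-d)^3 - (p-d)^3)/3 ≤ ∫ x in p..q, m3 a b c x := by
  rw [← int_sq]
  exact intervalIntegral.integral_mono_on hpq
    ((by fun_prop : Continuous (fun x : ℝ => (x-d)^2)).intervalIntegrable _ _)
    ((cont3 a b c).intervalIntegrable _ _) h

lemma piece_lb' (a b c d p q : ℝ) (hpq : p ≤ q)
    (h : ∀ x ∈ Set.Icc p q, (x-d)^2 ≤ m3 a b c x) :
    (q-p)^3/12 ≤ ∫ x in p..q, m3 a b c x :=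
  le_trans (by nlinarith [sq_nonneg (q + p - 2*d), sq_nonneg (q - p)]) (piece_lb a b c d p q hpq h)

lemma split_m3 (a b c p m q : ℝ) :
    ∫ x in p..q, m3 a b c x = (∫ x in p..m, m3 a b c x) + ∫ x in m..q, m3 a b c x :=
  (intervalIntegral.integral_add_adjacent_intervals
    ((cont3 a b c).intervalIntegrable _ _) ((cont3 a b c).intervalIntegrable _ _)).symm

lemma cube2 (s t : ℝ) (hs : 0 ≤ s) (ht : 0 ≤ t) : (s+t)^3/4 ≤ s^3+t^3 := by
  nlinarith [mul_nonneg (add_nonneg hs ht) (sq_nonneg (s-t))]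

lemma cube3 (s t r : ℝ) (hs : 0 ≤ s) (ht : 0 ≤ t) (hr : 0 ≤ r) :
    (s+t+r)^3/9 ≤ s^3+t^3+r^3 := by
  nlinarith [mul_nonneg (add_nonneg hs ht) (sq_nonneg (s-t)),
    mul_nonneg (add_nonneg ht hr) (sq_nonneg (t-r)),
    mul_nonneg (add_nonneg hs hr) (sq_nonneg (s-r)),
    mul_nonneg (add_nonneg (add_nonneg hs ht) hr)
      (by nlinarith [sq_nonneg (s-t), sq_nonneg (t-r), sq_nonneg (s-r)] :
        (0:ℝ) ≤ s^2+t^2+r^2-s*t-t*r-s*r)]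

/-- Lemma A : lower bound on the first interval when `b, c ≥ 1/2`. -/
lemma lemA (a b c : ℝ) (hb : 1/2 ≤ b) (hc : 1/2 ≤ c) :
    1/324 ≤ ∫ x in (0:ℝ)..(1/3), m3 a b c x := by
  rcases le_or_gt (1/2 : ℝ) a with ha | ha
  · -- bound by (x-1/2)^2
    have h := piece_lb a b c (1/2) 0 (1/3) (by norm_num) (fun x hx => by
      obtain ⟨h1, h2⟩ := hx
      exact le_min (le_min (sq_le_left x (1/2) a ha (by linarith))
        (sq_le_left x (1/2) b hb (by linarith))) (sq_le_left x (1/2) c hc (by linarith)))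
    nlinarith [h]
  rcases le_or_gt (1/6 : ℝ) a with ha6 | ha6
  · -- bound by (x-a)^2
    have h := piece_lb a b c a 0 (1/3) (by norm_num) (fun x hx => by
      obtain ⟨h1, h2⟩ := hx
      exact le_min (le_min (le_refl _)
        (sq_le_left x a b (by linarith) (by linarith))) (sq_le_left x a c (by linarith) (by linarith)))
    nlinarith [h, sq_nonneg (a - 1/6)]
  rcases le_or_gt a (-(1/2) : ℝ) with ham | ham
  · -- bound by (x-1/2)^2
    have h := piece_lb a b c (1/2) 0 (1/3) (by norm_num) (fun x hx => by
      obtain ⟨h1, h2⟩ := hx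
      exact le_min (le_min (sq_le_right x (1/2) a (by linarith) (by linarith))
        (sq_le_left x (1/2) b hb (by linarith))) (sq_le_left x (1/2) c hc (by linarith)))
    nlinarith [h]
  · -- split at m = (a+1/2)/2 ∈ (0,1/3)
    set m : ℝ := (a + 1/2)/2 with hm
    rw [split_m3 a b c 0 m (1/3)]
    have h1 := piece_lb a b c a 0 m (by simp only [hm]; linarith) (fun x hx => by
      obtain ⟨hx1, hx2⟩ := hx
      have hxm : x ≤ (a + 1/2)/2 := by simpa [hm] using hx2
      exact le_min (le_min (le_refl _)
        (sq_le_left x a b (by linarith) (by linarith)))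
        (sq_le_left x a c (by linarith) (by linarith)))
    have h2 := piece_lb a b c (1/2) m (1/3) (by simp only [hm]; linarith) (fun x hx => by
      obtain ⟨hx1, hx2⟩ := hx
      have hxm : (a + 1/2)/2 ≤ x := by simpa [hm] using hx1
      exact le_min (le_min (sq_le_right x (1/2) a (by linarith) (by linarith))
        (sq_le_left x (1/2) b hb (by linarith))) (sq_le_left x (1/2) c hc (by linarith)))
    simp only [hm] at h1 h2
    nlinarith [h1, h2, mul_nonneg (sq_nonneg (1/6 - a)) (show (0:ℝ) ≤ 5/6 + a by linarith)]

/-- Lemma B : lower bound on the middle interval. -/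
lemma lemB (a b c : ℝ) (ha : a ≤ 1/2) (hb1 : 1/2 ≤ b) (hb2 : b ≤ 5/6) (hc : 5/6 ≤ c) :
    1/8748 ≤ ∫ x in (2/3:ℝ)..(7/9), m3 a b c x := by
  rcases le_or_gt (13/18 : ℝ) b with hb3 | hb3
  · -- bound by (x-b)^2
    have h := piece_lb a b c b (2/3) (7/9) (by norm_num) (fun x hx => by
      obtain ⟨h1, h2⟩ := hx
      exact le_min (le_min (sq_le_right x b a (by linarith) (by linarith)) (le_refl _))
        (sq_le_left x b c (by linarith) (by linarith)))
    nlinarith [h, sq_nonneg (b - 13/18)]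
  · -- split at m = (b+5/6)/2 ∈ [2/3,7/9]
    set m : ℝ := (b + 5/6)/2 with hm
    rw [split_m3 a b c (2/3) m (7/9)]
    have h1 := piece_lb a b c b (2/3) m (by simp only [hm]; linarith) (fun x hx => by
      obtain ⟨hx1, hx2⟩ := hx
      have hxm : x ≤ (b + 5/6)/2 := by simpa [hm] using hx2
      exact le_min (le_min (sq_le_right x b a (by linarith) (by linarith)) (le_refl _))
        (sq_le_left x b c (by linarith) (by linarith)))
    have h2 := piece_lb a b c (5/6) m (7/9) (by simp only [hm]; linarith) (fun x hx => by
      obtain ⟨hx1, hx2⟩ := hx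
      have hxm : (b + 5/6)/2 ≤ x := by simpa [hm] using hx1
      exact le_min (le_min (sq_le_right x (5/6) a (by linarith) (by linarith))
        (sq_le_right x (5/6) b (by linarith) (by linarith)))
        (sq_le_left x (5/6) c hc (by linarith)))
    simp only [hm] at h1 h2
    nlinarith [h1, h2, mul_nonneg (sq_nonneg (13/18 - b)) (show (0:ℝ) ≤ 3*b - 7/6 by linarith)]

/-- Lemma C : lower bound on the last interval. -/
lemma lemC (a b c : ℝ) (ha : a ≤ 1/2) (hb : b ≤ 5/6) (hc : 5/6 ≤ c) :
    1/8748 ≤ ∫ x in (8/9:ℝ)..1, m3 a b c x := by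
  rcases le_or_gt c (17/18 : ℝ) with hc1 | hc1
  · -- bound by (x-c)^2
    have h := piece_lb a b c c (8/9) 1 (by norm_num) (fun x hx => by
      obtain ⟨h1, h2⟩ := hx
      exact le_min (le_min (sq_le_right x c a (by linarith) (by linarith))
        (sq_le_right x c b (by linarith) (by linarith))) (le_refl _))
    nlinarith [h, sq_nonneg (c - 17/18)]
  rcases le_or_gt (7/6 : ℝ) c with hc2 | hc2
  · -- bound by (x-5/6)^2
    have h := piece_lb a b c (5/6) (8/9) 1 (by norm_num) (fun x hx => by
      obtain ⟨h1, h2⟩ := hx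
      exact le_min (le_min (sq_le_right x (5/6) a (by linarith) (by linarith))
        (sq_le_right x (5/6) b hb (by linarith)))
        (sq_le_left x (5/6) c hc (by linarith)))
    nlinarith [h]
  · -- split at m = (5/6+c)/2 ∈ [8/9,1]
    set m : ℝ := (5/6 + c)/2 with hm
    rw [split_m3 a b c (8/9) m 1]
    have h1 := piece_lb a b c (5/6) (8/9) m (by simp only [hm]; linarith) (fun x hx => by
      obtain ⟨hx1, hx2⟩ := hx
      have hxm : x ≤ (5/6 + c)/2 := by simpa [hm] using hx2
      exact le_min (le_min (sq_le_right x (5/6) a (by linarith) (by linarith))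
        (sq_le_right x (5/6) b hb (by linarith)))
        (sq_le_left x (5/6) c hc (by linarith)))
    have h2 := piece_lb a b c c m 1 (by simp only [hm]; linarith) (fun x hx => by
      obtain ⟨hx1, hx2⟩ := hx
      have hxm : (5/6 + c)/2 ≤ x := by simpa [hm] using hx1
      exact le_min (le_min (sq_le_right x c a (by linarith) (by linarith))
        (sq_le_right x c b (by linarith) (by linarith))) (le_refl _))
    simp only [hm] at h1 h2
    nlinarith [h1, h2, mul_nonneg (sq_nonneg (c - 17/18)) (show (0:ℝ) ≤ 23/6 - 3*c by linarith)]

set_option maxHeartbeats 1000000 in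
/-- Lemma TP : three-point lower bound on the first interval when `a ≤ b ≤ 1/2 ≤ c`. -/
lemma lemTP (a b c : ℝ) (hab : a ≤ b) (hb : b ≤ 1/2) (hc : 1/2 ≤ c) :
    1/2916 ≤ ∫ x in (0:ℝ)..(1/3), m3 a b c x := by
  rcases le_or_gt (2/3 : ℝ) (a + b) with hA | hA
  · -- whole interval served by a
    have h := piece_lb' a b c a 0 (1/3) (by norm_num) (fun x hx => by
      obtain ⟨h1, h2⟩ := hx
      exact le_min (le_min (le_refl _) (sq_le_left x a b hab (by linarith)))
        (sq_le_left x a c (by linarith) (by linarith)))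
    nlinarith [h]
  rcases le_or_gt (1/3 : ℝ) ((b + 1/2)/2) with hB | hB
  · -- second cut beyond the interval
    rcases le_or_gt (a + b) 0 with hA0 | hA0
    · -- whole interval served by b
      have h := piece_lb' a b c b 0 (1/3) (by norm_num) (fun x hx => by
        obtain ⟨h1, h2⟩ := hx
        exact le_min (le_min (sq_le_right x b a hab (by linarith)) (le_refl _))
          (sq_le_left x b c (by linarith) (by linarith)))
      nlinarith [h]
    · -- split at m1 = (a+b)/2
      set m : ℝ := (a + b)/2 with hm
      rw [split_m3 a b c 0 m (1/3)]
      have h1 := piece_lb' a b c a 0 m (by simp only [hm]; linarith) (fun x hx => by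
        obtain ⟨hx1, hx2⟩ := hx
        have hxm : x ≤ (a + b)/2 := by simpa [hm] using hx2
        exact le_min (le_min (le_refl _) (sq_le_left x a b hab (by linarith)))
          (sq_le_left x a c (by linarith) (by linarith)))
      have h2 := piece_lb' a b c b m (1/3) (by simp only [hm]; linarith) (fun x hx => by
        obtain ⟨hx1, hx2⟩ := hx
        have hxm : (a + b)/2 ≤ x := by simpa [hm] using hx1
        exact le_min (le_min (sq_le_right x b a hab (by linarith)) (le_refl _))
          (sq_le_left x b c (by linarith) (by linarith)))
      simp only [hm] at h1 h2
      have hcube := cube2 ((a+b)/2 - 0) (1/3 - (a+b)/2) (by linarith) (by linarith)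
      nlinarith [h1, h2, hcube]
  · -- b + 1/2 < 2/3
    rcases le_or_gt (b + 1/2) 0 with hB0 | hB0
    · -- whole interval served by 1/2
      have h := piece_lb' a b c (1/2) 0 (1/3) (by norm_num) (fun x hx => by
        obtain ⟨h1, h2⟩ := hx
        exact le_min (le_min (sq_le_right x (1/2) a (by linarith) (by linarith))
          (sq_le_right x (1/2) b hb (by linarith)))
          (sq_le_left x (1/2) c hc (by linarith)))
      nlinarith [h]
    rcases le_or_gt (a + b) 0 with hA0 | hA0
    · -- split at m2 = (b+1/2)/2 only
      set m : ℝ := (b + 1/2)/2 with hm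
      rw [split_m3 a b c 0 m (1/3)]
      have h1 := piece_lb' a b c b 0 m (by simp only [hm]; linarith) (fun x hx => by
        obtain ⟨hx1, hx2⟩ := hx
        have hxm : x ≤ (b + 1/2)/2 := by simpa [hm] using hx2
        exact le_min (le_min (sq_le_right x b a hab (by linarith)) (le_refl _))
          (sq_le_left x b c (by linarith) (by linarith)))
      have h2 := piece_lb' a b c (1/2) m (1/3) (by simp only [hm]; linarith) (fun x hx => by
        obtain ⟨hx1, hx2⟩ := hx
        have hxm : (b + 1/2)/2 ≤ x := by simpa [hm] using hx1
        exact le_min (le_min (sq_le_right x (1/2) a (by linarith) (by linarith))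
          (sq_le_right x (1/2) b hb (by linarith)))
          (sq_le_left x (1/2) c hc (by linarith)))
      simp only [hm] at h1 h2
      have hcube := cube2 ((b+1/2)/2 - 0) (1/3 - (b+1/2)/2) (by linarith) (by linarith)
      nlinarith [h1, h2, hcube]
    · -- both cuts inside : split at m1 and m2
      set m1 : ℝ := (a + b)/2 with hm1
      set m2 : ℝ := (b + 1/2)/2 with hm2
      rw [split_m3 a b c 0 m2 (1/3), split_m3 a b c 0 m1 m2]
      have h1 := piece_lb' a b c a 0 m1 (by simp only [hm1]; linarith) (fun x hx => by
        obtain ⟨hx1, hx2⟩ := hx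
        have hxm : x ≤ (a + b)/2 := by simpa [hm1] using hx2
        exact le_min (le_min (le_refl _) (sq_le_left x a b hab (by linarith)))
          (sq_le_left x a c (by linarith) (by linarith)))
      have h2 := piece_lb' a b c b m1 m2 (by simp only [hm1, hm2]; linarith) (fun x hx => by
        obtain ⟨hx1, hx2⟩ := hx
        have hxm1 : (a + b)/2 ≤ x := by simpa [hm1] using hx1
        have hxm2 : x ≤ (b + 1/2)/2 := by simpa [hm2] using hx2
        exact le_min (le_min (sq_le_right x b a hab (by linarith)) (le_refl _))
          (sq_le_left x b c (by linarith) (by linarith)))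
      have h3 := piece_lb' a b c (1/2) m2 (1/3) (by simp only [hm2]; linarith) (fun x hx => by
        obtain ⟨hx1, hx2⟩ := hx
        have hxm : (b + 1/2)/2 ≤ x := by simpa [hm2] using hx1
        exact le_min (le_min (sq_le_right x (1/2) a (by linarith) (by linarith))
          (sq_le_right x (1/2) b hb (by linarith)))
          (sq_le_left x (1/2) c hc (by linarith)))
      simp only [hm1, hm2] at h1 h2 h3
      have hcube := cube3 ((a+b)/2 - 0) ((b+1/2)/2 - (a+b)/2) (1/3 - (b+1/2)/2)
        (by linarith) (by linarith) (by linarith)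
      nlinarith [h1, h2, h3, hcube]
lemma const_lb (a b c k p q : ℝ) (hpq : p ≤ q) (h : ∀ x ∈ Set.Icc p q, k ≤ m3 a b c x) :
    (q - p) * k ≤ ∫ x in p..q, m3 a b c x := by
  have hm := intervalIntegral.integral_mono_on hpq (intervalIntegrable_const (μ := MeasureTheory.volume) (c := k))
    ((cont3 a b c).intervalIntegrable _ _) h
  simpa using hm

set_option maxHeartbeats 2000000 in
lemma key (a b c : ℝ) (hab : a ≤ b) (hbc : b ≤ c) : 5/972 ≤ ∫ x, m3 a b c x ∂Q := by
  rw [Q_integral (m3 a b c) (cont3 a b c)]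
  rcases lt_or_ge c (1/2) with hc | hc
  · -- all three points below 1/2
    have h1 := nonneg3 a b c 0 (1/3) (by norm_num)
    have h2 := piece_lb a b c (1/2) (2/3) (7/9) (by norm_num) (fun x hx => by
      obtain ⟨hx1, hx2⟩ := hx
      exact le_min (le_min (sq_le_right x (1/2) a (by linarith) (by linarith))
        (sq_le_right x (1/2) b (by linarith) (by linarith)))
        (sq_le_right x (1/2) c (by linarith) (by linarith)))
    have h3 := piece_lb a b c (1/2) (8/9) 1 (by norm_num) (fun x hx => by
      obtain ⟨hx1, hx2⟩ := hx
      exact le_min (le_min (sq_le_right x (1/2) a (by linarith) (by linarith))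
        (sq_le_right x (1/2) b (by linarith) (by linarith)))
        (sq_le_right x (1/2) c (by linarith) (by linarith)))
    nlinarith [h1, h2, h3]
  rcases le_or_gt (1/2) a with ha | ha
  · -- all three points at least 1/2
    have h2 := nonneg3 a b c (2/3) (7/9) (by norm_num)
    have h3 := nonneg3 a b c (8/9) 1 (by norm_num)
    have h1 := piece_lb a b c (1/2) 0 (1/3) (by norm_num) (fun x hx => by
      obtain ⟨hx1, hx2⟩ := hx
      exact le_min (le_min (sq_le_left x (1/2) a ha (by linarith))
        (sq_le_left x (1/2) b (by linarith) (by linarith)))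
        (sq_le_left x (1/2) c (by linarith) (by linarith)))
    nlinarith [h1, h2, h3]
  -- from now on : a < 1/2 ≤ c
  rcases lt_or_ge b (1/2) with hb | hb
  · -- two points below 1/2
    have h1 := lemTP a b c hab (le_of_lt hb) hc
    rcases le_or_gt c (5/6) with hc1 | hc1
    · have h2 := piece_lb a b c c (2/3) (7/9) (by norm_num) (fun x hx => by
        obtain ⟨hx1, hx2⟩ := hx
        exact le_min (le_min (sq_le_right x c a (by linarith) (by linarith))
          (sq_le_right x c b hbc (by linarith))) (le_refl _))
      have h3 := piece_lb a b c c (8/9) 1 (by norm_num) (fun x hx => by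
        obtain ⟨hx1, hx2⟩ := hx
        exact le_min (le_min (sq_le_right x c a (by linarith) (by linarith))
          (sq_le_right x c b hbc (by linarith))) (le_refl _))
      nlinarith [h1, h2, h3, sq_nonneg (c - 5/6)]
    rcases le_or_gt c (31/36) with hc2 | hc2
    · have h2 := piece_lb a b c (5/6) (2/3) (7/9) (by norm_num) (fun x hx => by
        obtain ⟨hx1, hx2⟩ := hx
        exact le_min (le_min (sq_le_right x (5/6) a (by linarith) (by linarith))
          (sq_le_right x (5/6) b (by linarith) (by linarith)))
          (sq_le_left x (5/6) c (by linarith) (by linarith)))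
      have h3 := piece_lb a b c (31/36) (8/9) 1 (by norm_num) (fun x hx => by
        obtain ⟨hx1, hx2⟩ := hx
        exact le_min (le_min (sq_le_right x (31/36) a (by linarith) (by linarith))
          (sq_le_right x (31/36) b (by linarith) (by linarith)))
          (sq_le_right x (31/36) c (by linarith) (by linarith)))
      nlinarith [h1, h2, h3]
    rcases le_or_gt c (23/18) with hc3 | hc3
    · rw [split_m3 a b c (2/3) (49/72) (7/9)]
      have h2a := piece_lb a b c (1/2) (2/3) (49/72) (by norm_num) (fun x hx => by
        obtain ⟨hx1, hx2⟩ := hx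
        exact le_min (le_min (sq_le_right x (1/2) a (by linarith) (by linarith))
          (sq_le_right x (1/2) b (by linarith) (by linarith)))
          (sq_le_left x (1/2) c hc (by linarith)))
      have h2b := piece_lb a b c (31/36) (49/72) (7/9) (by norm_num) (fun x hx => by
        obtain ⟨hx1, hx2⟩ := hx
        exact le_min (le_min (sq_le_right x (31/36) a (by linarith) (by linarith))
          (sq_le_right x (31/36) b (by linarith) (by linarith)))
          (sq_le_left x (31/36) c (by linarith) (by linarith)))
      have h3 := piece_lb a b c c (8/9) 1 (by norm_num) (fun x hx => by
        obtain ⟨hx1, hx2⟩ := hx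
        exact le_min (le_min (sq_le_right x c a (by linarith) (by linarith))
          (sq_le_right x c b hbc (by linarith))) (le_refl _))
      nlinarith [h1, h2a, h2b, h3, sq_nonneg (c - 17/18)]
    · -- c very far right : constant bound on the last interval
      have h2 := nonneg3 a b c (2/3) (7/9) (by norm_num)
      have h3 := const_lb a b c (25/324) (8/9) 1 (by norm_num) (fun x hx => by
        obtain ⟨hx1, hx2⟩ := hx
        refine le_min (le_min ?_ ?_) ?_
        · nlinarith
        · nlinarith
        · nlinarith)
      have h1' := nonneg3 a b c 0 (1/3) (by norm_num)
      nlinarith [h1', h2, h3]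
  · -- b ≥ 1/2
    have h1 := lemA a b c hb hc
    rcases le_or_gt (5/6) b with hb5 | hb5
    · have h2 := piece_lb a b c (5/6) (2/3) (7/9) (by norm_num) (fun x hx => by
        obtain ⟨hx1, hx2⟩ := hx
        exact le_min (le_min (sq_le_right x (5/6) a (by linarith) (by linarith))
          (sq_le_left x (5/6) b hb5 (by linarith)))
          (sq_le_left x (5/6) c (by linarith) (by linarith)))
      have h3 := nonneg3 a b c (8/9) 1 (by norm_num)
      nlinarith [h1, h2, h3]
    rcases lt_or_ge c (5/6) with hc5 | hc5
    · have h3 := piece_lb a b c (5/6) (8/9) 1 (by norm_num) (fun x hx => by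
        obtain ⟨hx1, hx2⟩ := hx
        exact le_min (le_min (sq_le_right x (5/6) a (by linarith) (by linarith))
          (sq_le_right x (5/6) b (by linarith) (by linarith)))
          (sq_le_right x (5/6) c (by linarith) (by linarith)))
      have h2 := nonneg3 a b c (2/3) (7/9) (by norm_num)
      nlinarith [h1, h2, h3]
    · -- the balanced case, equality here
      have h2 := lemB a b c (by linarith) hb (by linarith) hc5
      have h3 := lemC a b c (by linarith) (by linarith) hc5
      nlinarith [h1, h2, h3]

lemma m3_comm12 (u v w x : ℝ) : m3 u v w x = m3 v u w x := by
  unfold m3; rw [min_comm ((x-u)^2)]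

lemma m3_comm23 (u v w x : ℝ) : m3 u v w x = m3 u w v x := by
  unfold m3; rw [min_assoc, min_comm ((x-v)^2), ← min_assoc]

theorem stmt_15 :
    (∫ x, min (min ((x - 1 / 6) ^ 2) ((x - 13 / 18) ^ 2)) ((x - 17 / 18) ^ 2) ∂Q) = 5 / 972 ∧
    ∀ a₁ a₂ a₃ : ℝ,
      5 / 972 ≤ ∫ x, min (min ((x - a₁) ^ 2) ((x - a₂) ^ 2)) ((x - a₃) ^ 2) ∂Q := by
  constructor
  · show (∫ x, m3 (1/6) (13/18) (17/18) x ∂Q) = 5/972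
    rw [Q_integral _ (cont3 (1/6) (13/18) (17/18))]
    have e1 : (∫ x in (0:ℝ)..(1/3), m3 (1/6) (13/18) (17/18) x)
        = ∫ x in (0:ℝ)..(1/3), (x - 1/6)^2 := by
      apply intervalIntegral.integral_congr
      intro x hx
      rw [Set.uIcc_of_le (by norm_num : (0:ℝ) ≤ 1/3)] at hx
      obtain ⟨h1, h2⟩ := hx
      unfold m3
      rw [min_eq_left (sq_le_left x (1/6) (13/18) (by norm_num) (by linarith)),
        min_eq_left (sq_le_left x (1/6) (17/18) (by norm_num) (by linarith))]
    have e2 : (∫ x in (2/3:ℝ)..(7/9), m3 (1/6) (13/18) (17/18) x)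
        = ∫ x in (2/3:ℝ)..(7/9), (x - 13/18)^2 := by
      apply intervalIntegral.integral_congr
      intro x hx
      rw [Set.uIcc_of_le (by norm_num : (2/3:ℝ) ≤ 7/9)] at hx
      obtain ⟨h1, h2⟩ := hx
      unfold m3
      rw [min_eq_right (sq_le_right x (13/18) (1/6) (by norm_num) (by linarith)),
        min_eq_left (sq_le_left x (13/18) (17/18) (by norm_num) (by linarith))]
    have e3 : (∫ x in (8/9:ℝ)..1, m3 (1/6) (13/18) (17/18) x)
        = ∫ x in (8/9:ℝ)..1, (x - 17/18)^2 := by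
      apply intervalIntegral.integral_congr
      intro x hx
      rw [Set.uIcc_of_le (by norm_num : (8/9:ℝ) ≤ 1)] at hx
      obtain ⟨h1, h2⟩ := hx
      unfold m3
      rw [min_eq_right (sq_le_right x (13/18) (1/6) (by norm_num) (by linarith)),
        min_eq_right (sq_le_right x (17/18) (13/18) (by norm_num) (by linarith))]
    rw [e1, e2, e3, int_sq, int_sq, int_sq]
    norm_num
  · intro a₁ a₂ a₃
    show 5/972 ≤ ∫ x, m3 a₁ a₂ a₃ x ∂Q
    have step : ∀ p q r : ℝ, p ≤ q → q ≤ r →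
        (∀ x, m3 a₁ a₂ a₃ x = m3 p q r x) → 5/972 ≤ ∫ x, m3 a₁ a₂ a₃ x ∂Q := by
      intro p q r hpq hqr hx
      simp only [hx]
      exact key p q r hpq hqr
    rcases le_total a₁ a₂ with h1 | h1
    · rcases le_total a₂ a₃ with h2 | h2
      · exact step a₁ a₂ a₃ h1 h2 (fun x => rfl)
      · rcases le_total a₁ a₃ with h3 | h3
        · exact step a₁ a₃ a₂ h3 h2 (fun x => m3_comm23 a₁ a₂ a₃ x)
        · exact step a₃ a₁ a₂ h3 h1
            (fun x => (m3_comm23 a₁ a₂ a₃ x).trans (m3_comm12 a₁ a₃ a₂ x))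
    · rcases le_total a₁ a₃ with h2 | h2
      · exact step a₂ a₁ a₃ h1 h2 (fun x => m3_comm12 a₁ a₂ a₃ x)
      · rcases le_total a₂ a₃ with h3 | h3
        · exact step a₂ a₃ a₁ h3 h2
            (fun x => (m3_comm12 a₁ a₂ a₃ x).trans (m3_comm23 a₂ a₁ a₃ x))
        · exact step a₃ a₂ a₁ h3 h1
            (fun x => ((m3_comm12 a₁ a₂ a₃ x).trans (m3_comm23 a₂ a₁ a₃ x)).trans
              (m3_comm12 a₂ a₃ a₁ x))
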